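/- Let (C, J) be a small site and let P be a flat presheaf of abelian groups on C (the objectwise tensor product P ⊗ − preserves monomorphisms of presheaves; equivalently P is torsion-free). Then the sheafification sP of P is a flat sheaf: for every monomorphism of abelian sheaves G → H, the induced morphism sP ⊗ G → sP ⊗ H of sheaves is a monomorphism, where the tensor product of abelian sheaves is the sheafification of the objectwise tensor product of underlying presheaves. -/

import Mathlib

/-!
STATEMENT 5: On a small site `(C, J)`, the sheafification of a flat presheaf of abelian
groups is a flat sheaf: if the objectwise tensor product with `P` preserves monomorphisms
of presheaves, then for every monomorphism of abelian sheaves `G → H` the induced morphism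
`sP ⊗ G → sP ⊗ H` of sheaves is a monomorphism (where the tensor product of sheaves is the
sheafification of the objectwise tensor product of the underlying presheaves).
-/

open CategoryTheory Limits Opposite

universe u

variable {C : Type u} [SmallCategory C]
/-- The objectwise tensor product (over `ℤ`) of two presheaves of abelian groups. -/
noncomputable def presheafTensorObj (P Q : Cᵒᵖ ⥤ AddCommGrpCat.{u}) : Cᵒᵖ ⥤ AddCommGrpCat.{u} where
  obj U := AddCommGrpCat.of (TensorProduct ℤ (P.obj U) (Q.obj U))
  map f := AddCommGrpCat.ofHom
    (TensorProduct.map (P.map f).hom.toIntLinearMap (Q.map f).hom.toIntLinearMap).toAddMonoidHom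
  map_id U := by
    ext x
    refine TensorProduct.induction_on x (by simp) (fun a b => by simp)
      (fun a b ha hb => by simp only [map_add, ha, hb])
  map_comp f g := by
    ext x
    refine TensorProduct.induction_on x (by simp) (fun a b => ?_)
      (fun a b ha hb => by simp only [map_add, ha, hb])
    show (P.map (f ≫ g)) a ⊗ₜ[ℤ] (Q.map (f ≫ g)) b
        = (P.map g) ((P.map f) a) ⊗ₜ[ℤ] (Q.map g) ((Q.map f) b)
    simp

/-- The morphism of presheaves `P ⊗ Q ⟶ P ⊗ R` induced by `f : Q ⟶ R`. -/
noncomputable def presheafTensorMap (P : Cᵒᵖ ⥤ AddCommGrpCat.{u}) {Q R : Cᵒᵖ ⥤ AddCommGrpCat.{u}}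
    (f : Q ⟶ R) : presheafTensorObj P Q ⟶ presheafTensorObj P R where
  app U := AddCommGrpCat.ofHom
    (TensorProduct.map (AddMonoidHom.id _).toIntLinearMap (f.app U).hom.toIntLinearMap).toAddMonoidHom
  naturality U V g := by
    ext x
    refine TensorProduct.induction_on x (by rfl) (fun a b => ?_)
      (fun a b ha hb => (map_add _ a b).trans ((congrArg₂ (· + ·) ha hb).trans (map_add _ a b).symm))
    show (P.map g) a ⊗ₜ[ℤ] (f.app V) ((Q.map g) b)
        = (P.map g) a ⊗ₜ[ℤ] (R.map g) ((f.app U) b)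
    exact congrArg₂ (· ⊗ₜ[ℤ] ·) rfl (CategoryTheory.congr_fun (f.naturality g) b)

variable (J : GrothendieckTopology C)

variable (J : GrothendieckTopology C)

/-- The tensor product of two abelian sheaves: the sheafification of the objectwise
tensor product of the underlying presheaves. -/
noncomputable def sheafTensorObj (F G : Sheaf J AddCommGrpCat.{u}) : Sheaf J AddCommGrpCat.{u} :=
  (presheafToSheaf J AddCommGrpCat.{u}).obj (presheafTensorObj F.val G.val)

/-- The morphism of abelian sheaves `F ⊗ G ⟶ F ⊗ H` induced by `f : G ⟶ H`. -/
noncomputable def sheafTensorMap (F : Sheaf J AddCommGrpCat.{u}) {G H : Sheaf J AddCommGrpCat.{u}}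
    (f : G ⟶ H) : sheafTensorObj J F G ⟶ sheafTensorObj J F H :=
  (presheafToSheaf J AddCommGrpCat.{u}).map (presheafTensorMap F.val f.hom)

/-- A presheaf of abelian groups is flat if the functor `P ⊗ −` preserves monomorphisms
of presheaves. -/
def PresheafFlat (P : Cᵒᵖ ⥤ AddCommGrpCat.{u}) : Prop :=
  ∀ ⦃Q R : Cᵒᵖ ⥤ AddCommGrpCat.{u}⦄ (f : Q ⟶ R), Mono f → Mono (presheafTensorMap P f)

/-! ### Auxiliary material -/

/-- Torsion-free abelian group. -/
def TFgrp (M : Type*) [AddCommGroup M] : Prop :=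
  ∀ (n : ℤ), n ≠ 0 → ∀ x : M, n • x = 0 → x = 0

/-- A torsion-free abelian group is flat over `ℤ`. -/
theorem flat_of_tf (M : Type*) [AddCommGroup M] (h : TFgrp M) : Module.Flat ℤ M := by
  rw [Module.Flat.iff_lTensor_injective']
  intro I
  obtain ⟨n, hn⟩ : I.IsPrincipal := inferInstance
  have hrep : ∀ z : TensorProduct ℤ M I,
      ∃ m : M, m ⊗ₜ[ℤ] (⟨n, hn ▸ Submodule.mem_span_singleton_self n⟩ : I) = z := by
    intro z
    induction z with
    | zero => exact ⟨0, TensorProduct.zero_tmul _ _⟩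
    | tmul m i =>
        obtain ⟨i, hi⟩ := i
        rw [hn, Submodule.mem_span_singleton] at hi
        obtain ⟨k, rfl⟩ := hi
        refine ⟨k • m, ?_⟩
        rw [TensorProduct.smul_tmul]
        congr 1
    | add z w hz hw =>
        obtain ⟨m₁, rfl⟩ := hz
        obtain ⟨m₂, rfl⟩ := hw
        exact ⟨m₁ + m₂, TensorProduct.add_tmul _ _ _⟩
  rw [injective_iff_map_eq_zero]
  intro z hz
  obtain ⟨m, rfl⟩ := hrep z
  rw [LinearMap.lTensor_tmul] at hz
  by_cases hn0 : n = 0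
  · subst hn0
    have h0 : (⟨(0:ℤ), hn ▸ Submodule.mem_span_singleton_self 0⟩ : I) = 0 := Subtype.ext rfl
    rw [h0, TensorProduct.tmul_zero]
  · have : n • m = 0 := by
      have := congrArg (TensorProduct.rid ℤ M) hz
      rwa [map_zero, TensorProduct.rid_tmul] at this
    rw [h n hn0 m this, TensorProduct.zero_tmul]

/-- `AddCommGrp` morphisms are `ℤ`-linear. -/
noncomputable instance (A B : AddCommGrpCat.{u}) : LinearMapClass (A →+ B) ℤ A B where
  map_add f := map_add (show A →+ B from f)
  map_smulₛₗ f := map_zsmul (show A →+ B from f)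

/-- The objectwise `n •` natural endomorphism. -/
def zsmulNat (Q : Cᵒᵖ ⥤ AddCommGrpCat.{u}) (n : ℤ) : Q ⟶ Q where
  app U := n • 𝟙 (Q.obj U)
  naturality U V g := by
    rw [Preadditive.comp_zsmul, Preadditive.zsmul_comp, Category.comp_id, Category.id_comp]

lemma zsmulNat_app (Q : Cᵒᵖ ⥤ AddCommGrpCat.{u}) (n : ℤ) (U : Cᵒᵖ) (x : Q.obj U) :
    (zsmulNat Q n).app U x = n • x := rfl

/-- A flat presheaf is objectwise torsion free. -/
theorem tf_of_presheafFlat {P : Cᵒᵖ ⥤ AddCommGrpCat.{u}} (hP : PresheafFlat P) (U : Cᵒᵖ) :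
    TFgrp (P.obj U) := by
  intro n hn x hx
  set Z : Cᵒᵖ ⥤ AddCommGrpCat.{u} := (Functor.const Cᵒᵖ).obj (AddCommGrpCat.of (ULift.{u} ℤ)) with hZ
  have hmono : Mono (zsmulNat Z n) := by
    have : ∀ V : Cᵒᵖ, Mono ((zsmulNat Z n).app V) := by
      intro V
      rw [AddCommGrpCat.mono_iff_injective]
      intro a b hab
      rw [zsmulNat_app, zsmulNat_app] at hab
      exact smul_right_injective (ULift.{u} ℤ) hn hab
    exact NatTrans.mono_of_mono_app _
  have := hP (zsmulNat Z n) hmono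
  have happ : Mono ((presheafTensorMap P (zsmulNat Z n)).app U) :=
    ((evaluation Cᵒᵖ AddCommGrpCat.{u}).obj U).map_mono (presheafTensorMap P (zsmulNat Z n))
  rw [AddCommGrpCat.mono_iff_injective] at happ
  -- apply injectivity to `x ⊗ₜ 1`
  have h1 : (presheafTensorMap P (zsmulNat Z n)).app U (x ⊗ₜ[ℤ] (ULift.up 1)) = 0 := by
    show (TensorProduct.map (AddMonoidHom.id _).toIntLinearMap
      ((zsmulNat Z n).app U).hom.toIntLinearMap) (x ⊗ₜ[ℤ] (ULift.up 1)) = 0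
    rw [TensorProduct.map_tmul]
    show x ⊗ₜ[ℤ] (n • ULift.up 1) = 0
    rw [TensorProduct.tmul_smul, TensorProduct.smul_tmul', hx, TensorProduct.zero_tmul]
  have h0 : (x ⊗ₜ[ℤ] (ULift.up 1) : TensorProduct ℤ (P.obj U) (ULift.{u} ℤ)) = 0 := by
    apply happ
    rw [h1]
    exact (map_zero _).symm
  -- conclude x = 0
  have hxx : (TensorProduct.rid ℤ (P.obj U))
      ((LinearMap.lTensor (P.obj U) (ULift.moduleEquiv.toLinearMap : ULift.{u} ℤ →ₗ[ℤ] ℤ))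
        (x ⊗ₜ[ℤ] (ULift.up 1))) = x := by
    rw [LinearMap.lTensor_tmul, TensorProduct.rid_tmul]
    exact one_smul ℤ x
  have h2 : (TensorProduct.rid ℤ (P.obj U))
      ((LinearMap.lTensor (P.obj U) (ULift.moduleEquiv.toLinearMap : ULift.{u} ℤ →ₗ[ℤ] ℤ))
        (x ⊗ₜ[ℤ] (ULift.up 1))) = 0 := by
    rw [h0, map_zero, map_zero]
  rw [hxx] at h2
  exact h2

/-- Multiequalizers of torsion-free objects are torsion free. -/
theorem tf_multiequalizer {K : MulticospanShape.{u, u}} (I : MulticospanIndex K AddCommGrpCat.{u})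
    [HasMultiequalizer I] (h : ∀ t : K.L, TFgrp (I.left t)) : TFgrp ((multiequalizer I : AddCommGrpCat.{u})) := by
  intro n hn x hx
  haveI : PreservesLimit I.multicospan (forget AddCommGrpCat.{u}) := inferInstance
  apply Concrete.multiequalizer_ext (C := AddCommGrpCat.{u})
  intro t
  have : (Multiequalizer.ι I t) (n • x) = 0 := by rw [hx, map_zero]
  rw [map_zsmul (show _ →+ _ from (Multiequalizer.ι I t).hom) n x] at this
  rw [h t n hn _ this, map_zero]

/-- The plus construction preserves objectwise torsion-freeness. -/
theorem tf_plus (P : Cᵒᵖ ⥤ AddCommGrpCat.{u}) (h : ∀ U, TFgrp (P.obj U)) (U : Cᵒᵖ) :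
    TFgrp ((J.plusObj P).obj U) := by
  intro n hn x hx
  obtain ⟨S, y, rfl⟩ := Concrete.colimit_exists_rep (J.diagram P U.unop) x
  have hy : colimit.ι (J.diagram P U.unop) S (n • y) = colimit.ι (J.diagram P U.unop) S 0 := by
    rw [map_zsmul]
    exact hx.trans (map_zero _).symm
  rw [Concrete.colimit_rep_eq_iff_exists] at hy
  obtain ⟨S', i, i', hii⟩ := hy
  rw [map_zsmul, map_zero] at hii
  have h0 := tf_multiequalizer (S'.unop.index P) (fun t => h _) n hn _ hii
  rw [← colimit.w (J.diagram P U.unop) i, ConcreteCategory.comp_apply, h0]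
  exact map_zero _

/-- Torsion-freeness transfers along isomorphisms of presheaves, objectwise. -/
theorem tf_of_iso {Q R : Cᵒᵖ ⥤ AddCommGrpCat.{u}} (e : Q ≅ R) (h : ∀ U, TFgrp (Q.obj U)) (U : Cᵒᵖ) :
    TFgrp (R.obj U) := by
  intro n hn x hx
  have h1 : n • (e.inv.app U x) = 0 := by
    rw [← map_zsmul (show _ →+ _ from (e.inv.app U).hom), hx, map_zero]
  have h2 := h U n hn _ h1
  have := congrArg (e.hom.app U) h2
  rw [map_zero] at this
  have h3 : e.hom.app U (e.inv.app U x) = x := by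
    have h4 := e.inv_hom_id_app U
    calc e.hom.app U (e.inv.app U x) = (e.inv.app U ≫ e.hom.app U) x := rfl
      _ = (𝟙 (R.obj U)) x := by rw [h4]
      _ = x := rfl
  rw [h3] at this
  exact this

theorem sheafification_of_flat_is_flat (P : Cᵒᵖ ⥤ AddCommGrpCat.{u}) (hP : PresheafFlat P)
    ⦃G H : Sheaf J AddCommGrpCat.{u}⦄ (f : G ⟶ H) (hf : Mono f) :
    Mono (sheafTensorMap J ((presheafToSheaf J AddCommGrpCat.{u}).obj P) f) := by
  -- the underlying presheaf of the sheafification is objectwise torsion-free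
  have htf : ∀ U, TFgrp ((((presheafToSheaf J AddCommGrpCat.{u}).obj P).val).obj U) := by
    have h1 : ∀ U, TFgrp ((J.sheafify P).obj U) :=
      tf_plus J _ (tf_plus J P (tf_of_presheafFlat hP))
    exact tf_of_iso (plusPlusIsoSheafify J AddCommGrpCat.{u} P) h1
  have hflat : ∀ U, Module.Flat ℤ ((((presheafToSheaf J AddCommGrpCat.{u}).obj P).val).obj U) :=
    fun U => flat_of_tf _ (htf U)
  -- f.hom is a mono of presheaves, hence objectwise injective
  have hfval : Mono f.hom := (sheafToPresheaf J AddCommGrpCat.{u}).map_mono f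
  have hinj : ∀ U, Function.Injective (f.hom.app U) := by
    intro U
    have : Mono (f.hom.app U) :=
      ((evaluation Cᵒᵖ AddCommGrpCat.{u}).obj U).map_mono f.hom
    rwa [AddCommGrpCat.mono_iff_injective] at this
  -- hence the presheaf tensor map is a mono
  have hmono : Mono (presheafTensorMap (((presheafToSheaf J AddCommGrpCat.{u}).obj P).val) f.hom) := by
    have : ∀ U, Mono ((presheafTensorMap (((presheafToSheaf J AddCommGrpCat.{u}).obj P).val) f.hom).app U) := by
      intro U
      rw [AddCommGrpCat.mono_iff_injective]
      have := hflat U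
      have hlt := Module.Flat.lTensor_preserves_injective_linearMap
        (M := (((presheafToSheaf J AddCommGrpCat.{u}).obj P).val).obj U)
        ((f.hom.app U).hom.toIntLinearMap) (hinj U)
      intro a b hab
      exact hlt hab
    exact NatTrans.mono_of_mono_app _
  exact (presheafToSheaf J AddCommGrpCat.{u}).map_mono _
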